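/- arXiv:0901.3198 — 2 statements merged into one kernel-verified Lean document; each statement's English description precedes it below -/
import Mathlib

section
/- Let Σ be a finite alphabet with background probabilities b_i > 0 summing to 1 and foreground probabilities f_{ij} ≥ 0 on pairs. For a set R of pairs define f(R) = Σ_{(i,j)∈R} f_{ij} and b(R) = Σ_{(i,j)∈R} b_i b_j. For a threshold t > 0 let R(t) = {(i,j) | f_{ij} > t · b_i b_j}. Then R(t) is not strictly dominated by any other set of pairs: there is no set α with f(α) ≥ f(R(t)), b(α) ≤ b(R(t)), and (f(α) > f(R(t)) or b(α) < b(R(t))). -/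
open Finset

/-- Foreground probability of a set of amino-acid pairs. -/
noncomputable def Fprob {S : Type*} (f : S × S → ℝ) (R : Finset (S × S)) : ℝ :=
  ∑ p ∈ R, f p

/-- Background probability of a set of amino-acid pairs. -/
noncomputable def Bprob {S : Type*} (b : S → ℝ) (R : Finset (S × S)) : ℝ :=
  ∑ p ∈ R, b p.1 * b p.2

/-- The threshold set `R(t)` of pairs with likelihood ratio exceeding `t`. -/
noncomputable def Rset {S : Type*} [Fintype S] (b : S → ℝ) (f : S × S → ℝ) (t : ℝ) :
    Finset (S × S) :=
  Finset.univ.filter fun p => t * (b p.1 * b p.2) < f p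

/-- `R(t)` is not strictly dominated by any other letter. -/
theorem stmt0 {S : Type*} [Fintype S] [DecidableEq S]
    (b : S → ℝ) (f : S × S → ℝ)
    (hb : ∀ i, 0 < b i) (hbsum : ∑ i, b i = 1)
    (hf : ∀ p, 0 ≤ f p)
    (t : ℝ) (ht : 0 < t) :
    ¬ ∃ α : Finset (S × S),
        Fprob f (Rset b f t) ≤ Fprob f α ∧
        Bprob b α ≤ Bprob b (Rset b f t) ∧
        (Fprob f (Rset b f t) < Fprob f α ∨ Bprob b α < Bprob b (Rset b f t)) := by
  rintro ⟨α, hF, hB, hstrict⟩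
  set R := Rset b f t with hR
  -- key inequality: f(α) - t b(α) ≤ f(R) - t b(R)
  have key : Fprob f α - t * Bprob b α ≤ Fprob f R - t * Bprob b R := by
    have h1 : Fprob f α - t * Bprob b α = ∑ p ∈ α, (f p - t * (b p.1 * b p.2)) := by
      simp [Fprob, Bprob, Finset.sum_sub_distrib, Finset.mul_sum]
    have h2 : Fprob f R - t * Bprob b R = ∑ p ∈ R, (f p - t * (b p.1 * b p.2)) := by
      simp [Fprob, Bprob, Finset.sum_sub_distrib, Finset.mul_sum]
    rw [h1, h2]
    have step1 : ∑ p ∈ α, (f p - t * (b p.1 * b p.2)) ≤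
        ∑ p ∈ α ∩ R, (f p - t * (b p.1 * b p.2)) := by
      have := Finset.sum_le_sum_of_subset_of_nonneg
        (Finset.inter_subset_left (s₁ := α) (s₂ := R))
        (f := fun p => -(f p - t * (b p.1 * b p.2))) ?_
      · simp only [Finset.sum_neg_distrib] at this
        linarith
      · intro p hp hnp
        have : p ∉ R := fun h => hnp (Finset.mem_inter.mpr ⟨hp, h⟩)
        simp only [hR, Rset, Finset.mem_filter, Finset.mem_univ, true_and, not_lt] at this
        linarith
    have step2 : ∑ p ∈ α ∩ R, (f p - t * (b p.1 * b p.2)) ≤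
        ∑ p ∈ R, (f p - t * (b p.1 * b p.2)) := by
      apply Finset.sum_le_sum_of_subset_of_nonneg Finset.inter_subset_right
      intro p hp _
      simp only [hR, Rset, Finset.mem_filter, Finset.mem_univ, true_and] at hp
      linarith
    linarith
  rcases hstrict with h | h
  · nlinarith [mul_le_mul_of_nonneg_left hB ht.le]
  · nlinarith [mul_lt_mul_of_pos_left h ht]
end

section
/- With the same setting, if α is any set of pairs satisfying f(α) = f(R(t)) and b(α) = b(R(t)), and additionally every pair in α \ R(t) has strict likelihood ratio f_{ij}/(b_i b_j) < t (strictly below threshold), then α = R(t). -/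
open Finset

/-- If `α` has the same foreground and background probabilities as `R(t)` and every pair of
`α \ R(t)` is strictly below the threshold, then `α = R(t)`. -/
theorem stmt2 {S : Type*} [Fintype S] [DecidableEq S]
    (b : S → ℝ) (f : S × S → ℝ)
    (hb : ∀ i, 0 < b i) (hf : ∀ p, 0 ≤ f p)
    (t : ℝ) (ht : 0 < t)
    (α : Finset (S × S))
    (hF : Fprob f α = Fprob f (Rset b f t))
    (hB : Bprob b α = Bprob b (Rset b f t))
    (hstrict : ∀ p ∈ α \ Rset b f t, f p < t * (b p.1 * b p.2)) :
    α = Rset b f t := by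
  set R := Rset b f t with hR
  set g : S × S → ℝ := fun p => f p - t * (b p.1 * b p.2) with hg
  have hsum : ∑ p ∈ α, g p = ∑ p ∈ R, g p := by
    simp only [hg, Finset.sum_sub_distrib, ← Finset.mul_sum]
    have h1 : ∑ p ∈ α, f p = ∑ p ∈ R, f p := hF
    have h2 : ∑ p ∈ α, b p.1 * b p.2 = ∑ p ∈ R, b p.1 * b p.2 := hB
    rw [h1, h2]
  have key : ∑ p ∈ α \ R, g p = ∑ p ∈ R \ α, g p := by
    have a1 := Finset.sum_inter_add_sum_sdiff α R g
    have a2 := Finset.sum_inter_add_sum_sdiff R α g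
    rw [Finset.inter_comm] at a2
    linarith
  have hneg : ∑ p ∈ α \ R, g p ≤ 0 := Finset.sum_nonpos fun p hp => by
    have := hstrict p hp
    simp only [hg]; linarith
  have hpos : 0 ≤ ∑ p ∈ R \ α, g p := Finset.sum_nonneg fun p hp => by
    have hpR : p ∈ R := (Finset.mem_sdiff.mp hp).1
    rw [hR, Rset, Finset.mem_filter] at hpR
    simp only [hg]; linarith [hpR.2]
  have hz2 : ∑ p ∈ R \ α, g p = 0 := le_antisymm (key ▸ hneg) hpos
  have hz1 : ∑ p ∈ α \ R, g p = 0 := by rw [key]; exact hz2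
  have hRα : R \ α = ∅ := by
    by_contra h
    obtain ⟨p, hp⟩ := Finset.nonempty_iff_ne_empty.mpr h
    have hpR : p ∈ R := (Finset.mem_sdiff.mp hp).1
    rw [hR, Rset, Finset.mem_filter] at hpR
    have hgp : 0 < g p := by simp only [hg]; linarith [hpR.2]
    have hle : ∀ q ∈ R \ α, 0 ≤ g q := fun q hq => by
      have hqR : q ∈ R := (Finset.mem_sdiff.mp hq).1
      rw [hR, Rset, Finset.mem_filter] at hqR
      simp only [hg]; linarith [hqR.2]
    have := Finset.sum_lt_sum_of_nonempty ⟨p, hp⟩ (fun q hq => by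
      have hqR : q ∈ R := (Finset.mem_sdiff.mp hq).1
      rw [hR, Rset, Finset.mem_filter] at hqR
      show (0:ℝ) < g q
      simp only [hg]; linarith [hqR.2])
    simp only [Finset.sum_const_zero] at this
    linarith [hz2]
  have hαR : α \ R = ∅ := by
    by_contra h
    obtain ⟨p, hp⟩ := Finset.nonempty_iff_ne_empty.mpr h
    have := Finset.sum_lt_sum_of_nonempty ⟨p, hp⟩ (fun q hq => by
      have := hstrict q hq
      show g q < (0:ℝ)
      simp only [hg]; linarith)
    simp only [Finset.sum_const_zero] at this
    linarith [hz1]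
  exact Finset.Subset.antisymm (Finset.sdiff_eq_empty_iff_subset.mp hαR)
    (Finset.sdiff_eq_empty_iff_subset.mp hRα)
end
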